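/- Let π : K ⊗_B K → K be the product map a ⊗_B b ↦ ab, where K = K(L) is the algebra of compact operators on a Hilbert space L, and the module tensor product is over B = B(L). Then π is injective (hence a linear isomorphism onto K, since every compact operator factors as a product of two compacts). -/

import Mathlib

set_option synthInstance.maxHeartbeats 1000000
set_option maxHeartbeats 1000000

noncomputable section

open ContinuousLinearMap TensorProduct

variable (L : Type*) [NormedAddCommGroup L] [InnerProductSpace ℂ L] [CompleteSpace L]

/-- The space `K = K(L)` of compact operators on `L`, as a `ℂ`-submodule of `B(L)`. -/
def cpt : Submodule ℂ (L →L[ℂ] L) := compactOperator (RingHom.id ℂ) L L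

variable {L}

/-- Left multiplication of a compact operator by a bounded operator. -/
def lK (g : L →L[ℂ] L) : cpt L →ₗ[ℂ] cpt L where
  toFun b := ⟨g ∘L (b : L →L[ℂ] L), by
    exact b.2.clm_comp g⟩
  map_add' b c := by ext : 1; simp [ContinuousLinearMap.comp_add]
  map_smul' m b := by ext : 1; simp [ContinuousLinearMap.comp_smul]

/-- Right multiplication of a compact operator by a bounded operator. -/
def rK (g : L →L[ℂ] L) : cpt L →ₗ[ℂ] cpt L where
  toFun b := ⟨(b : L →L[ℂ] L) ∘L g, by
    exact b.2.comp_clm g⟩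
  map_add' b c := by ext : 1; simp [ContinuousLinearMap.add_comp]
  map_smul' m b := by ext : 1; simp [ContinuousLinearMap.smul_comp]

/-- Multiplication `K × K → K` as a bilinear map. -/
def mulBil : cpt L →ₗ[ℂ] cpt L →ₗ[ℂ] cpt L :=
  LinearMap.mk₂ ℂ (fun a b => rK (b : L →L[ℂ] L) a)
    (fun a a' b => by ext : 1; simp [rK, ContinuousLinearMap.add_comp])
    (fun c a b => by ext : 1; simp [rK, ContinuousLinearMap.smul_comp])
    (fun a b b' => by ext : 1; simp [rK, ContinuousLinearMap.comp_add])
    (fun c a b => by ext : 1; simp [rK, ContinuousLinearMap.comp_smul])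

/-- The product map `π : K ⊗ K → K`, `a ⊗ b ↦ a b`. -/
def prodMap : TensorProduct ℂ (cpt L) (cpt L) →ₗ[ℂ] cpt L :=
  TensorProduct.lift mulBil

/-- The submodule of relations defining the module tensor product `K ⊗_B K`:
it is spanned by the elements `(a · b') ⊗ b − a ⊗ (b' · b)` with `a, b ∈ K`,
`b' ∈ B(L)`. -/
def relB : Submodule ℂ (TensorProduct ℂ (cpt L) (cpt L)) :=
  Submodule.span ℂ
    {z | ∃ (a b : cpt L) (b' : L →L[ℂ] L),
      z = (rK b' a) ⊗ₜ[ℂ] b - a ⊗ₜ[ℂ] (lK b' b)}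

open Filter Topology
open scoped InnerProductSpace Topology

private lemma cpt_mul_left {f g : L →L[ℂ] L} (hf : f ∈ cpt L) : f * g ∈ cpt L := by
  rw [ContinuousLinearMap.mul_def]
  exact IsCompactOperator.comp_clm hf g

private lemma cpt_mul_right {f g : L →L[ℂ] L} (hg : g ∈ cpt L) : f * g ∈ cpt L := by
  rw [ContinuousLinearMap.mul_def]
  exact IsCompactOperator.clm_comp hg f

private lemma bnd1 {q ρ : ℝ} (hq : 0 ≤ q) (hρ : 0 < ρ) :
    |q - q ^ 4 * (q ^ 3 + ρ ^ 3)⁻¹| ≤ ρ := by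
  have hden : 0 < q ^ 3 + ρ ^ 3 := by positivity
  have h1 : q - q ^ 4 * (q ^ 3 + ρ ^ 3)⁻¹ = ρ ^ 3 * q / (q ^ 3 + ρ ^ 3) := by
    field_simp; ring
  rw [h1, abs_of_nonneg (by positivity), div_le_iff₀ hden]
  rcases le_total q ρ with h | h
  · nlinarith [mul_le_mul_of_nonneg_left h (by positivity : (0:ℝ) ≤ ρ ^ 3),
      mul_nonneg hρ.le (pow_nonneg hq 3)]
  · nlinarith [mul_le_mul_of_nonneg_left (pow_le_pow_left₀ hρ.le h 2) (mul_nonneg hρ.le hq),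
      mul_nonneg hρ.le (pow_nonneg hρ.le 3)]

private lemma bnd2 {q ρ : ℝ} (hq : 0 ≤ q) (hρ : 0 < ρ) :
    |q ^ 2 * (q * (q ^ 2 + ρ ^ 2)⁻¹) - q| ≤ ρ := by
  have hden : 0 < q ^ 2 + ρ ^ 2 := by positivity
  have h1 : q ^ 2 * (q * (q ^ 2 + ρ ^ 2)⁻¹) - q = -(ρ ^ 2 * q / (q ^ 2 + ρ ^ 2)) := by
    field_simp; ring
  rw [h1, abs_neg, abs_of_nonneg (by positivity), div_le_iff₀ hden]
  nlinarith [sq_nonneg (q - ρ)]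

private lemma bnd3 {q ρ : ℝ} (hq : 0 ≤ q) (hρ : 0 < ρ) :
    |q ^ 2 * (q * (q * (q ^ 2 + ρ ^ 2)⁻¹) - 1)| ≤ ρ ^ 2 := by
  have hden : 0 < q ^ 2 + ρ ^ 2 := by positivity
  have h1 : q ^ 2 * (q * (q * (q ^ 2 + ρ ^ 2)⁻¹) - 1) = -(ρ ^ 2 * q ^ 2 / (q ^ 2 + ρ ^ 2)) := by
    field_simp; ring
  rw [h1, abs_neg, abs_of_nonneg (by positivity), div_le_iff₀ hden]
  nlinarith [sq_nonneg (q * ρ)]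

/-- fourth root -/
private def qr (t : ℝ) : ℝ := Real.sqrt (Real.sqrt t)

private lemma qr_cont : Continuous qr := Real.continuous_sqrt.comp Real.continuous_sqrt

private lemma qr_nonneg (t : ℝ) : 0 ≤ qr t := Real.sqrt_nonneg _

private lemma qr_sq (t : ℝ) : qr t ^ 2 = Real.sqrt t := Real.sq_sqrt (Real.sqrt_nonneg t)

private lemma qr_pow4 {t : ℝ} (ht : 0 ≤ t) : qr t ^ 4 = t := by
  have : qr t ^ 4 = (qr t ^ 2) ^ 2 := by ring
  rw [this, qr_sq, Real.sq_sqrt ht]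

/-- Key estimate: if `x x* ≤ a` then `‖cfc h a * x‖ ≤ C` whenever `t h(t)² ≤ C²` on the
spectrum. -/
private lemma key_est (a x : L →L[ℂ] L) (ha : 0 ≤ a) (hx : x * star x ≤ a)
    (h : ℝ → ℝ) (hh : ContinuousOn h (spectrum ℝ a))
    {C : ℝ} (hC : 0 ≤ C) (hb : ∀ t ∈ spectrum ℝ a, t * h t ^ 2 ≤ C ^ 2) :
    ‖cfc h a * x‖ ≤ C := by
  have hsa : IsSelfAdjoint (cfc h a) := cfc_predicate h a
  have h1 : (cfc h a * x) * star (cfc h a * x) = cfc h a * (x * star x) * cfc h a := by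
    rw [star_mul, hsa.star_eq, mul_assoc, mul_assoc, mul_assoc]
  have h2 : cfc h a * (x * star x) * cfc h a ≤ cfc h a * a * cfc h a :=
    hsa.conjugate_le_conjugate hx
  have h3 : cfc h a * a * cfc h a = cfc (fun t => h t * t * h t) a := by
    nth_rewrite 2 [← cfc_id ℝ a]
    rw [← cfc_mul h id a hh (continuousOn_id), ← cfc_mul (fun x => h x * id x) h a (hh.mul continuousOn_id) hh]
    rfl
  have h4 : ‖cfc (fun t => h t * t * h t) a‖ ≤ C ^ 2 := by
    refine norm_cfc_le (by positivity) fun t ht => ?_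
    have ht0 : 0 ≤ t := spectrum_nonneg_of_nonneg ha ht
    have : h t * t * h t = t * h t ^ 2 := by ring
    rw [this, Real.norm_eq_abs, abs_of_nonneg (by positivity)]
    exact hb t ht
  have h5 : ‖(cfc h a * x) * star (cfc h a * x)‖ ≤ C ^ 2 := by
    calc ‖(cfc h a * x) * star (cfc h a * x)‖
        ≤ ‖cfc h a * a * cfc h a‖ := by
          refine CStarAlgebra.norm_le_norm_of_nonneg_of_le ?_ (h1 ▸ h2)
          exact mul_star_self_nonneg _
      _ ≤ C ^ 2 := h3 ▸ h4
  rw [CStarRing.norm_self_mul_star] at h5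
  nlinarith [norm_nonneg (cfc h a * x)]

private lemma factor {ι : Type*} [Fintype ι] (a : ι → cpt L) :
    ∃ (c : cpt L) (d : ι → cpt L),
      (∀ i, (a i : L →L[ℂ] L) = (c : L →L[ℂ] L) * (d i : L →L[ℂ] L)) ∧
      (∀ i ξ, (d i : L →L[ℂ] L) ξ ∈
        (LinearMap.range ((c : L →L[ℂ] L) : L →ₗ[ℂ] L)).topologicalClosure) ∧
      (∀ x : L →L[ℂ] L,
        (∀ ξ, x ξ ∈ (LinearMap.range ((c : L →L[ℂ] L) : L →ₗ[ℂ] L)).topologicalClosure) →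
        (c : L →L[ℂ] L) * x = 0 → x = 0) := by
  classical
  set A0 : L →L[ℂ] L := ∑ i, (a i : L →L[ℂ] L) * star (a i : L →L[ℂ] L) with hA0def
  have hA0mem : A0 ∈ cpt L :=
    Submodule.sum_mem _ fun i _ => cpt_mul_left (a i).2
  have ha0 : (0 : L →L[ℂ] L) ≤ A0 :=
    Finset.sum_nonneg fun i _ => mul_star_self_nonneg _
  have hxle : ∀ i, (a i : L →L[ℂ] L) * star (a i : L →L[ℂ] L) ≤ A0 := fun i =>
    Finset.single_le_sum (f := fun j => (a j : L →L[ℂ] L) * star (a j : L →L[ℂ] L))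
      (fun j _ => mul_star_self_nonneg _) (Finset.mem_univ i)
  have hts : ∀ t ∈ spectrum ℝ A0, 0 ≤ t := fun t ht => spectrum_nonneg_of_nonneg ha0 ht
  set c0 : L →L[ℂ] L := cfc qr A0 with hc0def
  have hc0sa : IsSelfAdjoint c0 := cfc_predicate qr A0
  -- compactness of c0
  have hc0mem : c0 ∈ cpt L := by
    have hcl : c0 ∈ closure {f : L →L[ℂ] L | IsCompactOperator f} := by
      refine Metric.mem_closure_iff.2 fun ε hε => ?_
      set ρ := ε / 2 with hρdef
      have hρ : 0 < ρ := by positivity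
      have hcont : Continuous fun t : ℝ => (qr t ^ 3 + ρ ^ 3)⁻¹ :=
        ((qr_cont.pow 3).add continuous_const).inv₀ fun t =>
          (show (0:ℝ) < qr t ^ 3 + ρ ^ 3 by have := qr_nonneg t; positivity).ne'
      refine ⟨A0 * cfc (fun t => (qr t ^ 3 + ρ ^ 3)⁻¹) A0, cpt_mul_left hA0mem, ?_⟩
      have he : A0 * cfc (fun t : ℝ => (qr t ^ 3 + ρ ^ 3)⁻¹) A0
          = cfc (fun t : ℝ => t * (qr t ^ 3 + ρ ^ 3)⁻¹) A0 := by
        nth_rewrite 1 [← cfc_id ℝ A0]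
        rw [← cfc_mul _ _ A0 continuousOn_id hcont.continuousOn]
        rfl
      have hsub : cfc qr A0 - cfc (fun t : ℝ => t * (qr t ^ 3 + ρ ^ 3)⁻¹) A0
          = cfc (fun t : ℝ => qr t - t * (qr t ^ 3 + ρ ^ 3)⁻¹) A0 :=
        (cfc_sub qr _ A0 qr_cont.continuousOn
          (continuousOn_id.mul hcont.continuousOn)).symm
      rw [dist_eq_norm, he, hc0def, hsub]
      have hle : ‖cfc (fun t : ℝ => qr t - t * (qr t ^ 3 + ρ ^ 3)⁻¹) A0‖ ≤ ρ := by
        refine norm_cfc_le hρ.le fun t ht => ?_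
        rw [Real.norm_eq_abs]
        have := bnd1 (qr_nonneg t) hρ
        rwa [qr_pow4 (hts t ht)] at this
      calc ‖cfc (fun t : ℝ => qr t - t * (qr t ^ 3 + ρ ^ 3)⁻¹) A0‖ ≤ ρ := hle
        _ < ε := by rw [hρdef]; linarith
    rwa [isClosed_setOf_isCompactOperator.closure_eq] at hcl
  have hA0sa : IsSelfAdjoint A0 := .of_nonneg ha0
  set M : Submodule ℂ L :=
    (LinearMap.range ((c0 : L →L[ℂ] L) : L →ₗ[ℂ] L)).topologicalClosure with hMdef
  set ρs : ℕ → ℝ := fun n => ((n : ℝ) + 1)⁻¹ with hρsdef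
  have hρpos : ∀ n, 0 < ρs n := fun n => by positivity
  have hρanti : ∀ {n m : ℕ}, n ≤ m → ρs m ≤ ρs n := fun {n m} h => by
    apply inv_anti₀ (by positivity)
    have : (n : ℝ) ≤ m := by exact_mod_cast h
    linarith
  have hρ0 : Tendsto ρs atTop (𝓝 0) := by
    have : Tendsto (fun n : ℕ => 1 / ((n : ℝ) + 1)) atTop (𝓝 0) :=
      tendsto_one_div_add_atTop_nhds_zero_nat
    simp only [one_div] at this
    exact this
  have hcont2 : ∀ {ρ : ℝ}, 0 < ρ → Continuous fun t : ℝ => (qr t ^ 2 + ρ ^ 2)⁻¹ :=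
    fun {ρ} hρ => ((qr_cont.pow 2).add continuous_const).inv₀ fun t =>
      (show (0:ℝ) < qr t ^ 2 + ρ ^ 2 by have := qr_nonneg t; positivity).ne'
  have hgfcont : ∀ {ρ : ℝ}, 0 < ρ →
      Continuous fun t : ℝ => qr t * (qr t ^ 2 + ρ ^ 2)⁻¹ :=
    fun {ρ} hρ => qr_cont.mul (hcont2 hρ)
  have hdi : ∀ i : ι, ∃ dA : L →L[ℂ] L, dA ∈ cpt L ∧
      ((a i : L →L[ℂ] L) = c0 * dA) ∧ ∀ ξ, dA ξ ∈ M := by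
    intro i
    set u : ℕ → L →L[ℂ] L := fun n =>
      cfc (fun t : ℝ => qr t * (qr t ^ 2 + ρs n ^ 2)⁻¹) A0 * (a i : L →L[ℂ] L) with hudef
    have hucpt : ∀ n, u n ∈ cpt L := fun n => cpt_mul_right (a i).2
    have hufac : ∀ n, u n
        = c0 * (cfc (fun t : ℝ => (qr t ^ 2 + ρs n ^ 2)⁻¹) A0 * (a i : L →L[ℂ] L)) := by
      intro n
      rw [hudef, ← mul_assoc, hc0def,
        ← cfc_mul qr _ A0 qr_cont.continuousOn (hcont2 (hρpos n)).continuousOn]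
    have hdist : ∀ n m : ℕ, ‖u n - u m‖ ≤ ρs n + ρs m := by
      intro n m
      have hsub : u n - u m
          = cfc (fun t : ℝ => qr t * (qr t ^ 2 + ρs n ^ 2)⁻¹
              - qr t * (qr t ^ 2 + ρs m ^ 2)⁻¹) A0 * (a i : L →L[ℂ] L) := by
        rw [hudef, ← sub_mul,
          cfc_sub _ _ A0 (hgfcont (hρpos n)).continuousOn (hgfcont (hρpos m)).continuousOn]
      rw [hsub]
      refine key_est A0 _ ha0 (hxle i) _
        ((hgfcont (hρpos n)).sub (hgfcont (hρpos m))).continuousOn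
        (by positivity) ?_
      intro t ht
      simp only [Pi.sub_apply, Pi.mul_apply]
      have ht4' := qr_pow4 (hts t ht)
      set q := qr t with hqdef
      have hq : 0 ≤ q := qr_nonneg t
      have ht4 : q ^ 4 = t := ht4'
      have h2 := bnd2 (q := q) hq (hρpos n)
      have h2' := bnd2 (q := q) hq (hρpos m)
      have habs : |q ^ 2 * (q * (q ^ 2 + ρs n ^ 2)⁻¹
          - q * (q ^ 2 + ρs m ^ 2)⁻¹)| ≤ ρs n + ρs m := by
        have hre : q ^ 2 * (q * (q ^ 2 + ρs n ^ 2)⁻¹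
            - q * (q ^ 2 + ρs m ^ 2)⁻¹)
            = (q ^ 2 * (q * (q ^ 2 + ρs n ^ 2)⁻¹) - q)
              - (q ^ 2 * (q * (q ^ 2 + ρs m ^ 2)⁻¹) - q) := by ring
        rw [hre]
        exact (abs_sub _ _).trans (add_le_add h2 h2')
      have hre2 : t * (q * (q ^ 2 + ρs n ^ 2)⁻¹
          - q * (q ^ 2 + ρs m ^ 2)⁻¹) ^ 2
          = (q ^ 2 * (q * (q ^ 2 + ρs n ^ 2)⁻¹
              - q * (q ^ 2 + ρs m ^ 2)⁻¹)) ^ 2 := by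
        rw [← ht4]; ring
      rw [hre2, ← sq_abs]
      have hnn : (0:ℝ) ≤ ρs n + ρs m := by positivity
      nlinarith [abs_nonneg (q ^ 2 * (q * (q ^ 2 + ρs n ^ 2)⁻¹
        - q * (q ^ 2 + ρs m ^ 2)⁻¹))]
    have hcauchy : CauchySeq u := by
      refine cauchySeq_of_le_tendsto_0 (fun n => 2 * ρs n) (fun n m N hn hm => ?_) ?_
      · rw [dist_eq_norm]
        calc ‖u n - u m‖ ≤ ρs n + ρs m := hdist n m
          _ ≤ 2 * ρs N := by
            have := hρanti hn; have := hρanti hm; linarith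
      · simpa using hρ0.const_mul 2
    obtain ⟨dA, hdA⟩ := cauchySeq_tendsto_of_complete hcauchy
    have hdAcpt : dA ∈ cpt L :=
      isCompactOperator_of_tendsto hdA (Filter.Eventually.of_forall fun n => hucpt n)
    have hmul : ∀ n, c0 * u n
        = cfc (fun t : ℝ => qr t * (qr t * (qr t ^ 2 + ρs n ^ 2)⁻¹)) A0
            * (a i : L →L[ℂ] L) := by
      intro n
      rw [hudef, ← mul_assoc, hc0def,
        ← cfc_mul qr _ A0 qr_cont.continuousOn (hgfcont (hρpos n)).continuousOn]
    have hb : ∀ n, ‖c0 * u n - (a i : L →L[ℂ] L)‖ ≤ (ρs n) ^ 2 := by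
      intro n
      have hone : (a i : L →L[ℂ] L) = cfc (fun _ : ℝ => (1:ℝ)) A0 * (a i : L →L[ℂ] L) := by
        rw [cfc_const_one ℝ A0, one_mul]
      have hsub : c0 * u n - (a i : L →L[ℂ] L)
          = cfc (fun t : ℝ => qr t * (qr t * (qr t ^ 2 + ρs n ^ 2)⁻¹) - 1) A0
              * (a i : L →L[ℂ] L) := by
        nth_rewrite 1 [hmul n]
        nth_rewrite 2 [hone]
        rw [← sub_mul, cfc_sub (fun t : ℝ => qr t * (qr t * (qr t ^ 2 + ρs n ^ 2)⁻¹)) (fun _ : ℝ => (1:ℝ)) A0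
          (qr_cont.mul (hgfcont (hρpos n))).continuousOn continuousOn_const]
      rw [hsub]
      refine key_est A0 _ ha0 (hxle i) _
        ((qr_cont.mul (hgfcont (hρpos n))).sub continuous_const).continuousOn
        (by positivity) ?_
      intro t ht
      simp only [Pi.sub_apply, Pi.mul_apply]
      have ht4' := qr_pow4 (hts t ht)
      set q := qr t with hqdef
      have hq : 0 ≤ q := qr_nonneg t
      have ht4 : q ^ 4 = t := ht4'
      have h3 := bnd3 (q := q) hq (hρpos n)
      have hre2 : t * (q * (q * (q ^ 2 + ρs n ^ 2)⁻¹) - 1) ^ 2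
          = (q ^ 2 * (q * (q * (q ^ 2 + ρs n ^ 2)⁻¹) - 1)) ^ 2 := by
        rw [← ht4]; ring
      rw [hre2, ← sq_abs]
      have hnn : (0:ℝ) ≤ ρs n ^ 2 := by positivity
      nlinarith [abs_nonneg (q ^ 2 * (q * (q * (q ^ 2 + ρs n ^ 2)⁻¹) - 1))]
    have h1 : Tendsto (fun n => c0 * u n) atTop (𝓝 (c0 * dA)) := hdA.const_mul c0
    have h2 : Tendsto (fun n => c0 * u n) atTop (𝓝 (a i : L →L[ℂ] L)) := by
      rw [tendsto_iff_norm_sub_tendsto_zero]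
      refine squeeze_zero (fun n => norm_nonneg _) hb ?_
      have : Tendsto (fun n => ρs n * ρs n) atTop (𝓝 (0 * 0)) := hρ0.mul hρ0
      simpa [sq] using this
    have heq : (a i : L →L[ℂ] L) = c0 * dA := tendsto_nhds_unique h2 h1
    have happ : ∀ ξ : L, Tendsto (fun n => u n ξ) atTop (𝓝 (dA ξ)) := fun ξ =>
      ((ContinuousLinearMap.apply ℂ L ξ).continuous.tendsto dA).comp hdA
    have hrange : ∀ ξ : L, dA ξ ∈ M := by
      intro ξ
      have hmem : dA ξ ∈ closure
          ((LinearMap.range ((c0 : L →L[ℂ] L) : L →ₗ[ℂ] L)) : Set L) := by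
        refine mem_closure_of_tendsto (happ ξ) (Filter.Eventually.of_forall fun n => ?_)
        rw [hufac n]
        exact ⟨(cfc (fun t : ℝ => (qr t ^ 2 + ρs n ^ 2)⁻¹) A0 * (a i : L →L[ℂ] L)) ξ,
          by simp [ContinuousLinearMap.mul_apply]⟩
      rwa [← Submodule.topologicalClosure_coe, SetLike.mem_coe] at hmem
    exact ⟨dA, hdAcpt, heq, hrange⟩
  choose dA hdAcpt hdAeq hdArange using hdi
  refine ⟨⟨c0, hc0mem⟩, fun i => ⟨dA i, hdAcpt i⟩, fun i => hdAeq i, fun i ξ => hdArange i ξ, ?_⟩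
  intro x hxr hc0x
  ext ξ
  have hv : x ξ ∈ M := hxr ξ
  have hcv : c0 (x ξ) = 0 := by
    have := congrArg (fun f : L →L[ℂ] L => f ξ) hc0x
    simpa [ContinuousLinearMap.mul_apply] using this
  have horto : ∀ w ∈ closure
      ((LinearMap.range ((c0 : L →L[ℂ] L) : L →ₗ[ℂ] L)) : Set L),
      ⟪w, x ξ⟫_ℂ = 0 := by
    have hcl : IsClosed {w : L | ⟪w, x ξ⟫_ℂ = 0} :=
      isClosed_eq (continuous_id.inner continuous_const) continuous_const
    intro w hw
    refine closure_minimal ?_ hcl hw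
    rintro w ⟨y, rfl⟩
    have : ⟪c0 y, x ξ⟫_ℂ = ⟪y, c0 (x ξ)⟫_ℂ := by
      conv_lhs => rw [← hc0sa.adjoint_eq]
      exact ContinuousLinearMap.adjoint_inner_left c0 (x ξ) y
    simp [this, hcv]
  have hvc : x ξ ∈ closure
      ((LinearMap.range ((c0 : L →L[ℂ] L) : L →ₗ[ℂ] L)) : Set L) := by
    rw [← Submodule.topologicalClosure_coe, SetLike.mem_coe]
    exact hv
  have : ⟪x ξ, x ξ⟫_ℂ = 0 := horto _ hvc
  rw [inner_self_eq_zero] at this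
  simpa using this

private lemma prodMap_tmul (x y : cpt L) :
    _root_.prodMap (x ⊗ₜ[ℂ] y) = rK (y : L →L[ℂ] L) x := by
  simp [_root_.prodMap, mulBil]


/-- Theorem (part of Theorem 3): the product map
`π : K ⊗_B K → K : a ⊗_B b ↦ a b`, defined on the module tensor product over
`B = B(L)` — that is, on the quotient of `K ⊗ K` by the balancing relations
`relB` — is injective, and indeed a linear isomorphism onto `K` (every compact
operator being a product of two compact operators).  Equivalently: the kernel
of the product map `K ⊗ K → K` is exactly the relation submodule `relB`, and
the product map is surjective. -/
theorem prodMap_bijective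
    {L : Type*} [NormedAddCommGroup L] [InnerProductSpace ℂ L] [CompleteSpace L] :
    LinearMap.ker (prodMap (L := L)) = relB (L := L) ∧
      Function.Surjective (prodMap (L := L)) := by
  constructor
  · apply le_antisymm
    · -- ker ⊆ relB
      intro t ht
      rw [LinearMap.mem_ker] at ht
      obtain ⟨S, hS⟩ := TensorProduct.exists_finset t
      obtain ⟨c, d, heq, hrange, hinj⟩ := factor (L := L) (fun p : {x // x ∈ S} => p.1.1)
      -- rewrite t with attached index
      have ht' : t = ∑ p ∈ S.attach, (rK (↑(d p) : L →L[ℂ] L) c) ⊗ₜ[ℂ] p.1.2 := by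
        rw [hS, ← Finset.sum_attach S (fun p => p.1 ⊗ₜ[ℂ] p.2)]
        refine Finset.sum_congr rfl fun p _ => ?_
        congr 1
        refine Subtype.ext ?_
        show (p.1.1 : L →L[ℂ] L) = (c : L →L[ℂ] L) ∘L (↑(d p) : L →L[ℂ] L)
        rw [← ContinuousLinearMap.mul_def]
        exact heq p
      set s : cpt L := ∑ p ∈ S.attach, lK (↑(d p) : L →L[ℂ] L) p.1.2 with hsdef
      have hscoe : (s : L →L[ℂ] L)
          = ∑ p ∈ S.attach, (↑(d p) : L →L[ℂ] L) * (↑p.1.2 : L →L[ℂ] L) := by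
        rw [hsdef, AddSubmonoidClass.coe_finset_sum]
        exact Finset.sum_congr rfl fun p _ => (ContinuousLinearMap.mul_def _ _).symm
      have hptcoe : ((prodMap t : cpt L) : L →L[ℂ] L)
          = ∑ p ∈ S.attach, (↑p.1.1 : L →L[ℂ] L) * (↑p.1.2 : L →L[ℂ] L) := by
        have : prodMap t = ∑ p ∈ S.attach, rK (↑p.1.2 : L →L[ℂ] L) p.1.1 := by
          conv_lhs => rw [hS, ← Finset.sum_attach S (fun p => p.1 ⊗ₜ[ℂ] p.2)]
          rw [map_sum]
          exact Finset.sum_congr rfl fun p _ => prodMap_tmul _ _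
        rw [this, AddSubmonoidClass.coe_finset_sum]
        exact Finset.sum_congr rfl fun p _ => (ContinuousLinearMap.mul_def _ _).symm
      have hcs : (c : L →L[ℂ] L) * (s : L →L[ℂ] L) = 0 := by
        rw [hscoe, Finset.mul_sum]
        have : ∀ p ∈ S.attach,
            (c : L →L[ℂ] L) * ((↑(d p) : L →L[ℂ] L) * ↑p.1.2)
              = (↑p.1.1 : L →L[ℂ] L) * ↑p.1.2 := fun p _ => by
          rw [← mul_assoc, ← heq p]
        rw [Finset.sum_congr rfl this, ← hptcoe, ht]
        rfl
      have hsr : ∀ ξ : L, (s : L →L[ℂ] L) ξ ∈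
          (LinearMap.range ((c : L →L[ℂ] L) : L →ₗ[ℂ] L)).topologicalClosure := by
        intro ξ
        rw [hscoe]
        rw [ContinuousLinearMap.sum_apply]
        refine Submodule.sum_mem _ fun p _ => ?_
        rw [ContinuousLinearMap.mul_apply]
        exact hrange p _
      have hs0 : s = 0 := Subtype.ext (hinj _ hsr hcs)
      have hB : ∑ p ∈ S.attach, c ⊗ₜ[ℂ] (lK (↑(d p) : L →L[ℂ] L) p.1.2)
          = (0 : TensorProduct ℂ (cpt L) (cpt L)) := by
        rw [← tmul_sum, ← hsdef, hs0, tmul_zero]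
      have hkey : ∑ p ∈ S.attach, ((rK (↑(d p) : L →L[ℂ] L) c) ⊗ₜ[ℂ] p.1.2
              - c ⊗ₜ[ℂ] (lK (↑(d p) : L →L[ℂ] L) p.1.2))
          = (∑ p ∈ S.attach, (rK (↑(d p) : L →L[ℂ] L) c) ⊗ₜ[ℂ] p.1.2)
            - ∑ p ∈ S.attach, c ⊗ₜ[ℂ] (lK (↑(d p) : L →L[ℂ] L) p.1.2) := by
        induction S.attach using Finset.cons_induction with
        | empty => simp
        | cons a s ha ih =>
            rw [Finset.sum_cons, Finset.sum_cons, Finset.sum_cons, ih]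
            abel
      have hsplit : t = ∑ p ∈ S.attach, ((rK (↑(d p) : L →L[ℂ] L) c) ⊗ₜ[ℂ] p.1.2
              - c ⊗ₜ[ℂ] (lK (↑(d p) : L →L[ℂ] L) p.1.2)) := by
        rw [hkey, hB]
        exact ht'.trans (sub_zero (G := TensorProduct ℂ (cpt L) (cpt L)) _).symm
      rw [hsplit]
      exact Submodule.sum_mem _ fun p _ =>
        Submodule.subset_span ⟨c, p.1.2, (↑(d p) : L →L[ℂ] L), rfl⟩
    · -- relB ⊆ ker
      rw [relB, Submodule.span_le]
      rintro z ⟨a, b, b', rfl⟩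
      simp only [SetLike.mem_coe, LinearMap.mem_ker, map_sub]
      rw [prodMap_tmul, prodMap_tmul]
      refine sub_eq_zero.2 (Subtype.ext ?_)
      show (((a : L →L[ℂ] L) ∘L b') ∘L (b : L →L[ℂ] L))
          = (a : L →L[ℂ] L) ∘L (b' ∘L (b : L →L[ℂ] L))
      exact ContinuousLinearMap.ext fun ξ => rfl
  · intro aa
    obtain ⟨c, d, heq, -, -⟩ := factor (L := L) (fun _ : Fin 1 => aa)
    refine ⟨c ⊗ₜ[ℂ] d 0, ?_⟩
    rw [prodMap_tmul]
    exact Subtype.ext (heq 0).symm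

end
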